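/- arXiv:math/0402387 — 3 statements merged into one kernel-verified Lean document; each statement's English description precedes it below -/
import Mathlib

section
/- Let A = R[z]/(z^n) with R = ℂ[[x]]. If 0 → M' → M → M'' → 0 is a short exact sequence of finitely generated A-modules, then the generalized ranks are additive: R(M) = R(M') + R(M''), where R(N) denotes the R-rank of ⊕_{i=1}^n z^{i-1}N/z^iN. -/
set_option synthInstance.maxHeartbeats 1000000
set_option maxHeartbeats 1000000
set_option linter.unusedVariables false


/-!
STATEMENT 4: over `A = R[z]/(zⁿ)` with `R = ℂ[[x]]`, the generalized rank
`R(N) = rank_R (⊕ᵢ z^{i-1}N/zⁱN)` is additive on short exact sequences of finitely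
generated `A`-modules: `R(M) = R(M') + R(M'')`.
-/

open Polynomial

noncomputable section

abbrev Rx : Type := PowerSeries ℂ

abbrev An (n : ℕ) : Type := Rx[X] ⧸ Ideal.span {(X : Rx[X]) ^ n}

def zn (n : ℕ) : An n := Ideal.Quotient.mk _ (X : Rx[X])

def xn (n : ℕ) : An n := Ideal.Quotient.mk _ (C PowerSeries.X : Rx[X])

abbrev filtStep (n : ℕ) (M : Type) [AddCommGroup M] [Module (An n) M] (i : ℕ) :
    Submodule (An n) M :=
  Ideal.span {zn n ^ i} • (⊤ : Submodule (An n) M)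

/-- the `i`-th piece `zⁱM / z^{i+1}M` of the graded module of the canonical filtration. -/
abbrev grPiece (n : ℕ) (M : Type) [AddCommGroup M] [Module (An n) M] (i : ℕ) : Type :=
  ↥(filtStep n M i) ⧸
    (Submodule.comap (filtStep n M i).subtype (filtStep n M (i + 1)))

/-- the rank of an `R`-module, `dim_{Frac R} (N ⊗_R Frac R)`. -/
abbrev rrank (N : Type) [AddCommGroup N] [Module Rx N] : ℕ :=
  Module.finrank (FractionRing Rx) (LocalizedModule (nonZeroDivisors Rx) N)

/-- the generalized rank `R(M) = rank_R Gr(M)` of an `A`-module `M`. -/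
abbrev genRank (n : ℕ) (M : Type) [AddCommGroup M] [Module (An n) M] : ℕ :=
  ∑ i ∈ Finset.range n, @rrank (RestrictScalars Rx (An n) (grPiece n M i)) _
    (RestrictScalars.module Rx (An n) (grPiece n M i))

instance rsModule {n : ℕ} {T : Type} [AddCommGroup T] [Module (An n) T] :
    @Module Rx (RestrictScalars Rx (An n) T) _ AddCommGroup.toAddCommMonoid :=
  RestrictScalars.module Rx (An n) T


lemma rrank_congr {M N : Type} [AddCommGroup M] [Module Rx M] [AddCommGroup N] [Module Rx N]
    (e : M ≃ₗ[Rx] N) : rrank M = rrank N :=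
  (LinearEquiv.ofBijective (LocalizedModule.map (nonZeroDivisors Rx) e.toLinearMap)
    ⟨LocalizedModule.map_injective _ _ e.injective,
     LocalizedModule.map_surjective _ _ e.surjective⟩).finrank_eq

lemma rrank_of_subsingleton {N : Type} [AddCommGroup N] [Module Rx N] [Subsingleton N] :
    rrank N = 0 := by
  haveI : Subsingleton (LocalizedModule (nonZeroDivisors Rx) N) := by
    constructor
    intro a b
    induction a using LocalizedModule.induction_on with | _ m s =>
    induction b using LocalizedModule.induction_on with | _ m' s' =>
    rw [Subsingleton.elim m 0, Subsingleton.elim m' 0, LocalizedModule.zero_mk,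
      LocalizedModule.zero_mk]
  exact Module.finrank_zero_of_subsingleton

lemma rrank_additive {M' M M'' : Type} [AddCommGroup M'] [Module Rx M']
    [AddCommGroup M] [Module Rx M] [AddCommGroup M''] [Module Rx M'']
    [Module.Finite Rx M]
    (f : M' →ₗ[Rx] M) (g : M →ₗ[Rx] M'') (hf : Function.Injective f)
    (hg : Function.Surjective g) (hfg : LinearMap.range f = LinearMap.ker g) :
    rrank M = rrank M' + rrank M'' := by
  set S := nonZeroDivisors Rx
  haveI : Module.Finite (FractionRing Rx) (LocalizedModule S M) :=
    Module.Finite.of_isLocalizedModule S (LocalizedModule.mkLinearMap S M)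
  set F := LocalizedModule.map S f with hF
  set G := LocalizedModule.map S g with hG
  have hFi : Function.Injective F := LocalizedModule.map_injective S f hf
  have hGs : Function.Surjective G := LocalizedModule.map_surjective S g hg
  have hex : Function.Exact F G := by
    have := LocalizedModule.map_exact S f g (LinearMap.exact_iff.mpr hfg.symm)
    exact this
  have h1 : LinearMap.ker G = LinearMap.range F := LinearMap.exact_iff.mp hex
  have h2 := LinearMap.finrank_range_add_finrank_ker G
  rw [h1, LinearMap.range_eq_top.mpr hGs, finrank_top] at h2
  rw [LinearMap.finrank_range_of_inj hFi] at h2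
  show Module.finrank (Localization S) (LocalizedModule S M) =
    Module.finrank (Localization S) (LocalizedModule S M') +
      Module.finrank (Localization S) (LocalizedModule S M'')
  omega

section RS
variable {n : ℕ} {T U V : Type} [AddCommGroup T] [Module (An n) T]
  [AddCommGroup U] [Module (An n) U] [AddCommGroup V] [Module (An n) V]

def rsMap (f : T →ₗ[An n] U) :
    RestrictScalars Rx (An n) T →ₗ[Rx] RestrictScalars Rx (An n) U where
  toFun t := f t
  map_add' := f.map_add
  map_smul' r t := by
    rw [RingHom.id_apply, RestrictScalars.smul_def]
    exact f.map_smul (algebraMap Rx (An n) r) t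

@[simp] lemma rsMap_apply (f : T →ₗ[An n] U) (t : T) : rsMap f t = f t := rfl

def rsEquiv (e : T ≃ₗ[An n] U) :
    RestrictScalars Rx (An n) T ≃ₗ[Rx] RestrictScalars Rx (An n) U :=
  LinearEquiv.ofLinear (rsMap e.toLinearMap) (rsMap e.symm.toLinearMap)
    (by ext u; exact e.apply_symm_apply u) (by ext t; exact e.symm_apply_apply t)

instance finiteAn : Module.Finite Rx (An n) :=
  Module.Finite.of_basis (AdjoinRoot.powerBasis' (monic_X_pow (R := Rx) n)).basis

instance finiteRS [Module.Finite (An n) T] :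
    @Module.Finite Rx (RestrictScalars Rx (An n) T) _ AddCommGroup.toAddCommMonoid rsModule := by
  letI : Module (An n) (RestrictScalars Rx (An n) T) := RestrictScalars.moduleOrig Rx (An n) T
  haveI : Module.Finite (An n) (RestrictScalars Rx (An n) T) :=
    ‹Module.Finite (An n) T›
  haveI : IsScalarTower Rx (An n) (RestrictScalars Rx (An n) T) :=
    RestrictScalars.isScalarTower Rx (An n) T
  exact Module.Finite.trans (An n) (RestrictScalars Rx (An n) T)

lemma rs_additive [Module.Finite (An n) U] (f : T →ₗ[An n] U) (g : U →ₗ[An n] V)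
    (hf : Function.Injective f) (hg : Function.Surjective g)
    (hfg : LinearMap.range f = LinearMap.ker g) :
    rrank (RestrictScalars Rx (An n) U) =
      rrank (RestrictScalars Rx (An n) T) + rrank (RestrictScalars Rx (An n) V) := by
  have h : ∀ u : U, (∃ t, f t = u) ↔ g u = 0 := fun u => by
    rw [← LinearMap.mem_range, hfg, LinearMap.mem_ker]
  refine rrank_additive (rsMap f) (rsMap g) hf hg ?_
  ext u
  change (∃ t, f t = u) ↔ g u = 0
  exact h u

end RS

section Filt
variable (n : ℕ) (M : Type) [AddCommGroup M] [Module (An n) M]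

lemma filtStep_zero : filtStep n M 0 = ⊤ := by
  rw [filtStep, pow_zero, Ideal.span_singleton_one, Submodule.top_smul]

lemma zn_pow_n : zn n ^ n = 0 := by
  rw [zn, ← map_pow]
  exact Ideal.Quotient.eq_zero_iff_mem.mpr (Ideal.subset_span rfl)

lemma filtStep_n : filtStep n M n = ⊥ := by
  rw [filtStep, zn_pow_n, Ideal.span_singleton_eq_bot.mpr rfl, Submodule.bot_smul]

lemma filtStep_mono (i : ℕ) : filtStep n M (i + 1) ≤ filtStep n M i :=
  Submodule.smul_mono_left
    (Ideal.span_singleton_le_span_singleton (α := An n) |>.mpr (pow_dvd_pow (zn n) (Nat.le_succ i)))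

variable [Module.Finite (An n) M]

lemma step (i : ℕ) :
    rrank (RestrictScalars Rx (An n) ↥(filtStep n M i)) =
      rrank (RestrictScalars Rx (An n) (grPiece n M i)) +
        rrank (RestrictScalars Rx (An n) ↥(filtStep n M (i + 1))) := by
  have h := rs_additive
    (Submodule.comap (filtStep n M i).subtype (filtStep n M (i + 1))).subtype
    (Submodule.comap (filtStep n M i).subtype (filtStep n M (i + 1))).mkQ
    (Submodule.injective_subtype _) (Submodule.mkQ_surjective _)
    (by rw [Submodule.range_subtype, Submodule.ker_mkQ])
  have e1 : rrank (RestrictScalars Rx (An n)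
        ↥(Submodule.comap (filtStep n M i).subtype (filtStep n M (i + 1)))) =
      rrank (RestrictScalars Rx (An n) ↥(filtStep n M (i + 1))) :=
    rrank_congr (rsEquiv (Submodule.comapSubtypeEquivOfLe (filtStep_mono n M i)))
  rw [h, e1]
  exact Nat.add_comm _ _

lemma telescope (m : ℕ) :
    rrank (RestrictScalars Rx (An n) M) =
      (∑ i ∈ Finset.range m, rrank (RestrictScalars Rx (An n) (grPiece n M i))) +
        rrank (RestrictScalars Rx (An n) ↥(filtStep n M m)) := by
  induction m with
  | zero =>
    simp only [Finset.range_zero, Finset.sum_empty, Nat.zero_add]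
    exact (rrank_congr (rsEquiv
      ((LinearEquiv.ofEq _ _ (filtStep_zero n M)) ≪≫ₗ Submodule.topEquiv))).symm
  | succ m ih =>
    rw [ih, step n M m, Finset.sum_range_succ]
    omega

lemma genRank_eq : genRank n M = rrank (RestrictScalars Rx (An n) M) := by
  have h := telescope n M n
  rw [filtStep_n] at h
  haveI : Subsingleton ↥(⊥ : Submodule (An n) M) := inferInstance
  haveI : Subsingleton (RestrictScalars Rx (An n) ↥(⊥ : Submodule (An n) M)) :=
    ‹Subsingleton ↥(⊥ : Submodule (An n) M)›
  rw [rrank_of_subsingleton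
    (N := RestrictScalars Rx (An n) ↥(⊥ : Submodule (An n) M)), Nat.add_zero] at h
  exact h.symm

end Filt

theorem stmt_4 (n : ℕ) (hn : 0 < n)
    (M' M M'' : Type) [AddCommGroup M'] [Module (An n) M'] [AddCommGroup M]
    [Module (An n) M] [AddCommGroup M''] [Module (An n) M'']
    [Module.Finite (An n) M'] [Module.Finite (An n) M] [Module.Finite (An n) M'']
    (f : M' →ₗ[An n] M) (g : M →ₗ[An n] M'')
    (hf : Function.Injective f) (hg : Function.Surjective g)
    (hfg : LinearMap.range f = LinearMap.ker g) :
    genRank n M = genRank n M' + genRank n M'' := by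
  rw [genRank_eq n M, genRank_eq n M', genRank_eq n M'']
  exact rs_additive f g hf hg hfg
end
end

section
/- Let A = ℂ[[x,z]]/(z^2). Every finitely generated torsion-free A-module M is reflexive: the canonical map M → Hom_A(Hom_A(M, A), A) is an isomorphism. -/
/-!
STATEMENT 7: over `A = ℂ[[x,z]]/(z²)`, every finitely generated torsion-free `A`-module
is reflexive: the canonical map `M → Hom_A(Hom_A(M,A), A)` is an isomorphism.
-/

open Polynomial

set_option synthInstance.maxHeartbeats 800000
set_option maxHeartbeats 4000000

noncomputable section

/-- `A = ℂ[[x]][z]/(z²)`, the local ring `𝒪_{2,P}` of a primitive double curve. -/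
abbrev A2 : Type := Rx[X] ⧸ Ideal.span {(X : Rx[X]) ^ 2}

/-- the class `z` in `A`. -/
def zq : A2 := Ideal.Quotient.mk _ (X : Rx[X])

/-- the element `x` in `A`. -/
def xq : A2 := Ideal.Quotient.mk _ (C PowerSeries.X : Rx[X])

lemma monicX2 : ((X : Rx[X]) ^ 2).Monic := monic_X_pow 2

@[reducible] def instCommRingA2 : CommRing A2 := inferInstance

section A2Inst

attribute [local instance] instCommRingA2

/-- coefficient-of-`z` functional on `A2`. -/
def phi : A2 →ₗ[Rx] Rx :=
  (Polynomial.lcoeff Rx 1).comp (AdjoinRoot.modByMonicHom monicX2)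

lemma phi_mk (p : Rx[X]) : phi (Ideal.Quotient.mk _ p) = p.coeff 1 := by
  show ((p %ₘ (X:Rx[X])^2)).coeff 1 = p.coeff 1
  rw [modByMonic_eq_sub_mul_div _ ((X:Rx[X])^2), coeff_sub]
  rw [show ((X:Rx[X])^2 * (p /ₘ X^2)).coeff 1 = 0 by
    rw [mul_comm, coeff_mul_X_pow']; simp]
  ring

lemma xq_eq : xq = algebraMap Rx A2 PowerSeries.X := rfl

lemma algebraMap_A2 (r : Rx) : algebraMap Rx A2 r = Ideal.Quotient.mk _ (C r) := rfl

lemma smul_A2 (r : Rx) (a : A2) : r • a = algebraMap Rx A2 r * a := Algebra.smul_def r a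

lemma zq_sq : zq * zq = 0 := by
  show Ideal.Quotient.mk _ ((X:Rx[X]) * X) = 0
  rw [Ideal.Quotient.eq_zero_iff_mem, ← sq]
  exact Ideal.subset_span rfl

lemma phi_z : phi zq = 1 := by simpa [zq] using phi_mk X

lemma phi_algebraMap (r : Rx) : phi (algebraMap Rx A2 r) = 0 := by
  rw [algebraMap_A2, phi_mk]; simp

lemma decomp (a : A2) : a = algebraMap Rx A2 (phi (zq * a)) + phi a • zq := by
  obtain ⟨p, rfl⟩ := Ideal.Quotient.mk_surjective a
  have hz : zq * Ideal.Quotient.mk _ p = Ideal.Quotient.mk _ ((X : Rx[X]) * p) := rfl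
  rw [hz, phi_mk, phi_mk, coeff_X_mul, smul_A2, algebraMap_A2, algebraMap_A2]
  show _ = _ + Ideal.Quotient.mk _ (C (p.coeff 1)) * Ideal.Quotient.mk _ X
  rw [← map_mul, ← map_add, Ideal.Quotient.eq, Ideal.mem_span_singleton]
  rw [Polynomial.X_pow_dvd_iff]
  intro d hd
  interval_cases d <;> simp


section DualTransfer

variable (M : Type) [AddCommGroup M] [Module A2 M] [Module Rx M] [IsScalarTower Rx A2 M]

/-- `Hom_A(M,A) → Hom_R(M,R)` by postcomposing with `phi`. -/
def toR : Module.Dual A2 M →ₗ[Rx] Module.Dual Rx M where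
  toFun f := phi.comp (f.restrictScalars Rx)
  map_add' f g := by ext m; simp
  map_smul' r f := by ext m; simp

@[simp] lemma toR_apply (f : Module.Dual A2 M) (m : M) : toR M f m = phi (f m) := rfl

/-- inverse map `Hom_R(M,R) → Hom_A(M,A)`. -/
def ofR (g : Module.Dual Rx M) : Module.Dual A2 M where
  toFun m := algebraMap Rx A2 (g (zq • m)) + g m • zq
  map_add' m n := by
    have h1 : zq • (m + n) = zq • m + zq • n := smul_add zq m n
    rw [h1, map_add, map_add]
    have h2 : g (m + n) • zq = g m • zq + g n • zq := by
      rw [map_add]; exact add_smul (g m) (g n) zq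
    rw [h2]
    abel
  map_smul' a m := by
    dsimp only [RingHom.id_apply]
    set c0 : Rx := phi (zq * a) with hc0
    set c1 : Rx := phi a with hc1
    have ha : a = algebraMap Rx A2 c0 + c1 • zq := decomp a
    have hza : zq * a = algebraMap Rx A2 c0 * zq := by
      rw [ha, mul_add, mul_smul_comm, zq_sq, smul_zero, add_zero]
      exact mul_comm zq (algebraMap Rx A2 c0)
    have h1 : zq • (a • m) = (algebraMap Rx A2 c0) • (zq • m) := by
      rw [smul_smul, hza]; exact mul_smul (algebraMap Rx A2 c0) zq m
    have h2 : g (zq • (a • m)) = c0 * g (zq • m) := by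
      rw [h1, algebraMap_smul, map_smul, smul_eq_mul]
    have h3 : g (a • m) = c0 * g m + c1 * g (zq • m) := by
      have e1 : a • m = (algebraMap Rx A2 c0) • m + (c1 • zq) • m := by
        conv_lhs => rw [ha]
        exact add_smul (algebraMap Rx A2 c0) (c1 • zq) m
      have e2 : (c1 • zq) • m = c1 • (zq • m) := smul_assoc c1 zq m
      rw [e1, e2, algebraMap_smul, map_add, map_smul, map_smul, smul_eq_mul, smul_eq_mul]
    rw [h2, h3]
    conv_rhs => rw [ha]
    have e3 : ∀ (r : Rx) (b : A2), r • b = algebraMap Rx A2 r * b := smul_A2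
    have e4 : ∀ (b c : A2), b • c = b * c := fun b c => rfl
    rw [e3, e3, e4, e3]
    simp only [map_mul, map_add]
    linear_combination (- algebraMap Rx A2 c1 * algebraMap Rx A2 (g m)) * zq_sq

@[simp] lemma ofR_apply (g : Module.Dual Rx M) (m : M) :
    ofR M g m = algebraMap Rx A2 (g (zq • m)) + g m • zq := rfl

/-- `Hom_A(M,A) ≃ Hom_R(M,R)` (as `R`-modules). -/
def dualEquiv : Module.Dual A2 M ≃ₗ[Rx] Module.Dual Rx M :=
  { toR M with
    invFun := ofR M
    left_inv := fun f => by
      refine LinearMap.ext fun m => ?_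
      show algebraMap Rx A2 (phi (f (zq • m))) + phi (f m) • zq = f m
      have h1 : f (zq • m) = zq * f m := f.map_smul zq m
      rw [h1]
      exact (decomp (f m)).symm
    right_inv := fun g => by
      refine LinearMap.ext fun m => ?_
      show phi (algebraMap Rx A2 (g (zq • m)) + g m • zq) = g m
      rw [map_add, phi_algebraMap, map_smul, phi_z, zero_add, smul_eq_mul, mul_one] }

@[simp] lemma dualEquiv_apply (f : Module.Dual A2 M) (m : M) :
    dualEquiv M f m = phi (f m) := rfl

end DualTransfer

end A2Inst

/-- `B = A/(z) ≅ ℂ[[x]]`. -/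
abbrev Bq : Type := A2 ⧸ Ideal.span {zq}

/-- the ideal `I_k = (x^k, z) ⊂ A`. -/
def Iq (k : ℕ) : Ideal A2 := Ideal.span {xq ^ k, zq}

/-- a module is torsion free if no nonzero element is annihilated by a power of `x`. -/
def IsTorsionFree (M : Type) [AddCommGroup M] [Module A2 M] : Prop :=
  ∀ (m : M) (k : ℕ), xq ^ k • m = 0 → m = 0

theorem stmt_7 (M : Type) [AddCommGroup M] [Module A2 M] [Module.Finite A2 M]
    (hM : IsTorsionFree M) :
    Function.Bijective (Module.Dual.eval A2 M) := by
  letI : CommRing A2 := instCommRingA2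
  letI : Module Rx M := Module.compHom M (algebraMap Rx A2)
  haveI : IsScalarTower Rx A2 M :=
    ⟨fun r a m => by
      show (r • a) • m = algebraMap Rx A2 r • (a • m)
      rw [Algebra.smul_def r a]
      exact mul_smul (algebraMap Rx A2 r) a m⟩
  haveI : Module.Finite Rx A2 := by
    classical
    refine ⟨⟨{1, zq}, ?_⟩⟩
    rw [eq_top_iff]
    rintro a -
    rw [decomp a]
    refine add_mem ?_ (Submodule.smul_mem _ _ (Submodule.subset_span (by simp)))
    rw [Algebra.algebraMap_eq_smul_one]
    exact Submodule.smul_mem _ _ (Submodule.subset_span (by simp))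
  haveI : Module.Finite Rx M := Module.Finite.trans A2 M
  haveI : NoZeroSMulDivisors Rx M := by
    refine ⟨fun {r m} hrm => ?_⟩
    rcases eq_or_ne r 0 with h | h
    · exact Or.inl h
    refine Or.inr ?_
    obtain ⟨n, u, hu⟩ :=
      IsDiscreteValuationRing.eq_unit_mul_pow_irreducible h PowerSeries.X_irreducible
    apply hM m n
    have hx : (PowerSeries.X : Rx) ^ n • m = 0 := by
      have hinv : (PowerSeries.X : Rx) ^ n = ((u⁻¹ : Rxˣ) : Rx) * r := by
        rw [hu, ← mul_assoc, Units.inv_mul, one_mul]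
      rw [hinv, mul_smul, hrm, smul_zero]
    calc xq ^ n • m = ((algebraMap Rx A2) (PowerSeries.X ^ n)) • m := by rw [map_pow, xq_eq]
      _ = (PowerSeries.X : Rx) ^ n • m := algebraMap_smul A2 _ m
      _ = 0 := hx
  haveI : Module.Free Rx M := Module.free_of_finite_type_torsion_free'
  haveI : IsScalarTower Rx A2 (Module.Dual A2 M) :=
    ⟨fun r a f => LinearMap.ext fun m => smul_assoc r a (f m)⟩
  let D := dualEquiv M
  let e : Module.Dual A2 (Module.Dual A2 M) ≃ₗ[Rx] Module.Dual Rx (Module.Dual Rx M) :=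
    (dualEquiv (Module.Dual A2 M)).trans D.symm.dualMap
  have key : ∀ m : M, e (Module.Dual.eval A2 M m) = Module.Dual.eval Rx M m := by
    intro m
    ext g
    have h1 : e (Module.Dual.eval A2 M m) g = phi ((D.symm g) m) := rfl
    have h2 : phi ((D.symm g) m) = (D (D.symm g)) m := rfl
    rw [h1, h2, D.apply_symm_apply]
    rfl
  have hcomp : ⇑e ∘ ⇑(Module.Dual.eval A2 M) = ⇑(Module.Dual.eval Rx M) :=
    funext fun m => key m
  have hb : Function.Bijective (⇑e ∘ ⇑(Module.Dual.eval A2 M)) := by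
    rw [hcomp]; exact Module.bijective_dual_eval Rx M
  exact (Function.Bijective.of_comp_iff' e.bijective _).mp hb
end
end

section
/- Let A = ℂ[[x,z]]/(z^2), β ∈ ℂ[[x]] of the form β = x^m·α with α a unit and m ≥ 0, and consider the extension of A-modules 0 → B → E → B → 0 (B = A/(z)) corresponding to β under the identification Ext^1_A(B, B) ≅ B. Then E ≅ I_m = (x^m, z) ⊂ A. In particular the extension corresponding to a unit gives E ≅ A. -/
/-!
STATEMENT 11: over `A = ℂ[[x,z]]/(z²)`, `B = A/(z)`: the extension of `A`-modules
`0 → B → E → B → 0` whose class corresponds to `β = xᵐ·α` (`α` a unit) under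
`Ext¹_A(B,B) ≅ B` satisfies `E ≅ I_m = (xᵐ, z)`; in particular for a unit class
(`m = 0`) one gets `E ≅ A`.  The class of the extension is encoded concretely: for any
`e ∈ E` lifting `1 ∈ B` one has `z·e = f(β)` (this identifies the class under the
isomorphism coming from the 2-periodic resolution `… → A →z A → B → 0`).
-/

open Polynomial

noncomputable section

instance instIsTwoSidedA2 (I : Ideal A2) : I.IsTwoSided :=
  Ideal.instIsTwoSided_1 (α := A2) I

/-- the class of `x` in `B = A/(z)`. -/
def xB : Bq := Ideal.Quotient.mk _ xq

abbrev IX : Ideal Rx[X] := Ideal.span {(X : Rx[X]) ^ 2}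
abbrev JX : Ideal Rx[X] := Ideal.span {(X : Rx[X])}

lemma hIJ : IX ≤ JX := by
  rw [Ideal.span_le]
  rintro _ rfl
  exact Ideal.mem_span_singleton.2 ⟨X, sq X⟩

lemma span_zq_eq : (Ideal.span {zq} : Ideal A2) = JX.map (Ideal.Quotient.mk IX) := by
  rw [Ideal.map_span, Set.image_singleton]; rfl

-- membership in (zq) for a lifted element
lemma mem_span_zq_iff (v : Rx[X]) :
    Ideal.Quotient.mk IX v ∈ (Ideal.span {zq} : Ideal A2) ↔ (X : Rx[X]) ∣ v := by
  rw [span_zq_eq, Ideal.mem_quotient_iff_mem hIJ, Ideal.mem_span_singleton]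

-- cancel x: b * xB = 0 → b = 0
lemma xB_cancel (b : Bq) (h : b * xB = 0) : b = 0 := by
  obtain ⟨w, rfl⟩ := Ideal.Quotient.mk_surjective b
  obtain ⟨v, rfl⟩ := Ideal.Quotient.mk_surjective w
  rw [Ideal.Quotient.eq_zero_iff_mem]
  have h' : Ideal.Quotient.mk IX v * xq ∈ (Ideal.span {zq} : Ideal A2) := by
    rw [← Ideal.Quotient.eq_zero_iff_mem, map_mul]
    exact h
  rw [show Ideal.Quotient.mk IX v * xq = Ideal.Quotient.mk IX (v * C PowerSeries.X) from
    (map_mul _ _ _).symm, mem_span_zq_iff] at h'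
  rw [mem_span_zq_iff]
  rcases (Polynomial.prime_X (R := Rx)).2.2 _ _ h' with h1 | h2
  · exact h1
  · exfalso
    simp only [Polynomial.X_dvd_iff, Polynomial.coeff_C, if_pos rfl] at h2
    exact PowerSeries.X_ne_zero h2

lemma xB_pow_cancel (b : Bq) (k : ℕ) (h : b * xB ^ k = 0) : b = 0 := by
  induction k with
  | zero => simpa using h
  | succ n ih => exact ih (xB_cancel _ (by rw [mul_assoc, ← pow_succ]; exact h))

-- annihilator of z:  w * zq = 0 → w ∈ (zq)
lemma zq_ann (w : A2) (h : w * zq = 0) : w ∈ (Ideal.span {zq} : Ideal A2) := by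
  obtain ⟨v, rfl⟩ := Ideal.Quotient.mk_surjective w
  rw [mem_span_zq_iff]
  have : Ideal.Quotient.mk IX (v * X) = 0 := by simpa [zq, map_mul] using h
  rw [Ideal.Quotient.eq_zero_iff_mem, Ideal.mem_span_singleton] at this
  obtain ⟨c, hc⟩ := this
  have hx : (X : Rx[X]) ≠ 0 := Polynomial.X_ne_zero
  have : v = X * c := by
    have := hc
    rw [sq, mul_assoc] at this
    exact mul_right_cancel₀ hx (by linear_combination this)
  exact ⟨c, this⟩

def ζ : Bq →ₗ[A2] A2 :=
  Submodule.liftQ (Ideal.span {zq}) (LinearMap.toSpanSingleton A2 A2 zq) (by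
    rw [Ideal.span_le]
    rintro _ rfl
    have : zq * zq = 0 := by
      have : (Ideal.Quotient.mk IX) (X^2) = 0 :=
        Ideal.Quotient.eq_zero_iff_mem.2 (Ideal.subset_span rfl)
      simpa [zq, pow_two, map_mul] using this
    simp [LinearMap.mem_ker, LinearMap.toSpanSingleton_apply, smul_eq_mul, this])

lemma ζ_mk (w : A2) : ζ (Ideal.Quotient.mk _ w) = w * zq := rfl

lemma smul_bq (a : A2) (b : Bq) :
    a • b = Ideal.Quotient.mk (Ideal.span {zq}) a * b := by
  obtain ⟨w, rfl⟩ := Ideal.Quotient.mk_surjective b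
  rfl

lemma ζ_mem (b : Bq) : ζ b ∈ (Ideal.span {zq} : Ideal A2) := by
  obtain ⟨w, rfl⟩ := Ideal.Quotient.mk_surjective b
  rw [ζ_mk]
  exact Ideal.mul_mem_left _ _ (Ideal.subset_span rfl)

set_option maxHeartbeats 1000000 in
set_option synthInstance.maxHeartbeats 400000 in
theorem stmt_11 (m : ℕ) (α : Bqˣ) (β : Bq) (hβ : β = xB ^ m * α)
    (E : Type) [AddCommGroup E] [Module A2 E]
    (f : Bq →ₗ[A2] E) (g : E →ₗ[A2] Bq)
    (hf : Function.Injective f) (hg : Function.Surjective g)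
    (hfg : LinearMap.range f = LinearMap.ker g)
    (e : E) (he : g e = 1) (hze : zq • e = f β) :
    Nonempty (E ≃ₗ[A2] ↥(Iq m)) ∧ (m = 0 → Nonempty (E ≃ₗ[A2] A2)) := by
  subst hβ
  letI : CommRing Bq := @Ideal.Quotient.commRing A2 _ (Ideal.span {zq})
  have hgf : ∀ b : Bq, g (f b) = 0 := fun b => by
    have : f b ∈ LinearMap.ker g := hfg ▸ LinearMap.mem_range_self f b
    exact this
  set mkB := Ideal.Quotient.mk (Ideal.span {zq}) with hmkB
  -- the two parallel surjections
  let p : A2 × Bq →ₗ[A2] E :=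
    (LinearMap.toSpanSingleton A2 E e).comp (LinearMap.fst A2 A2 Bq) +
      f.comp (LinearMap.snd A2 A2 Bq)
  have hp : ∀ w : A2 × Bq, p w = w.1 • e + f w.2 := fun w => rfl
  haveI : SMulCommClass A2 Bq Bq := ⟨fun a b c => by
    show a • (b * c) = b * (a • c)
    rw [smul_bq, smul_bq]; ring⟩
  let q0 : A2 × Bq →ₗ[A2] A2 :=
    (LinearMap.toSpanSingleton A2 A2 (xq ^ m)).comp (LinearMap.fst A2 A2 Bq) +
      ζ.comp ((LinearMap.mulLeft A2 ((α⁻¹ : Bqˣ) : Bq)).comp (LinearMap.snd A2 A2 Bq))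
  have hq0 : ∀ w : A2 × Bq, q0 w = w.1 * xq ^ m + ζ (((α⁻¹ : Bqˣ) : Bq) * w.2) := by
    intro w
    simp [q0, LinearMap.toSpanSingleton_apply, smul_eq_mul, LinearMap.mulLeft]
  have hmem : ∀ w : A2 × Bq, q0 w ∈ Iq m := by
    intro w
    rw [hq0]
    refine Ideal.add_mem _ ?_ ?_
    · exact Ideal.mul_mem_left _ _ (Ideal.subset_span (Set.mem_insert _ _))
    · obtain ⟨d, hd⟩ := Ideal.Quotient.mk_surjective (((α⁻¹ : Bqˣ) : Bq) * w.2)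
      rw [← hd, ζ_mk]
      exact Ideal.mul_mem_left _ _ (Ideal.subset_span (Set.mem_insert_of_mem _ rfl))
  let q : A2 × Bq →ₗ[A2] ↥(Iq m) := q0.codRestrict (Iq m) hmem
  -- surjectivity of p
  have hpsurj : Function.Surjective p := by
    intro w
    obtain ⟨a, ha⟩ := Ideal.Quotient.mk_surjective (g w)
    have h0 : g (w - a • e) = 0 := by
      rw [map_sub, map_smul, he, smul_bq, mul_one, ← hmkB, ha, sub_self]
    have : w - a • e ∈ LinearMap.range f := hfg ▸ h0
    obtain ⟨b, hb⟩ := this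
    exact ⟨(a, b), by rw [hp]; rw [hb]; abel⟩
  -- surjectivity of q
  have hqsurj : Function.Surjective q := by
    rintro ⟨y, hy⟩
    obtain ⟨a, b, hab⟩ := Submodule.mem_span_pair.1 hy
    refine ⟨(a, (α : Bq) * mkB b), Subtype.ext ?_⟩
    show q0 (a, (α : Bq) * mkB b) = y
    rw [hq0, ← mul_assoc, Units.inv_mul, one_mul, ζ_mk]
    simpa [smul_eq_mul] using hab
  -- kernels agree
  have hker : LinearMap.ker p = LinearMap.ker q0 := by
    ext w
    obtain ⟨a, b⟩ := w
    simp only [LinearMap.mem_ker, hp, hq0]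
    constructor
    · intro h
      have hga : mkB a = 0 := by
        have h1 := congrArg g h
        rw [map_add, map_smul, he, hgf, add_zero, map_zero, smul_bq, mul_one] at h1
        exact h1
      obtain ⟨c, hc⟩ := Ideal.mem_span_singleton'.1 (Ideal.Quotient.eq_zero_iff_mem.1 hga)
      have hb : b = -(mkB c * (xB ^ m * ↑α)) := by
        have h2 : f (mkB c * (xB ^ m * ↑α) + b) = 0 := by
          rw [map_add, ← smul_bq, map_smul, ← hze, ← mul_smul, hc]
          exact h
        have h3 := hf (by rw [h2, map_zero] : f (mkB c * (xB ^ m * ↑α) + b) = f 0)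
        linear_combination h3
      rw [← hc, hb]
      have h4 : ((α⁻¹ : Bqˣ) : Bq) * -(mkB c * (xB ^ m * ↑α)) = -(mkB c * xB ^ m) := by
        linear_combination (-(mkB c * xB ^ m)) * α.inv_mul
      rw [h4]
      have h5 : ζ (-(mkB c * xB ^ m)) = -(c * xq ^ m * zq) := by
        rw [show mkB c * xB ^ m = mkB (c * xq ^ m) from by rw [map_mul, map_pow]; rfl,
          map_neg, ζ_mk]
      rw [h5]
      ring
    · intro h
      have hga : mkB a = 0 := by
        have h1 := congrArg mkB h
        rw [map_add, map_mul, map_zero] at h1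
        have h2 : mkB (ζ (((α⁻¹ : Bqˣ) : Bq) * b)) = 0 :=
          Ideal.Quotient.eq_zero_iff_mem.2 (ζ_mem _)
        rw [h2, add_zero, map_pow] at h1
        exact xB_pow_cancel _ m h1
      obtain ⟨c, hc⟩ := Ideal.mem_span_singleton'.1 (Ideal.Quotient.eq_zero_iff_mem.1 hga)
      obtain ⟨d, hd⟩ := Ideal.Quotient.mk_surjective (((α⁻¹ : Bqˣ) : Bq) * b)
      rw [← hd, ζ_mk, ← hc] at h
      have h4 : (c * xq ^ m + d) * zq = 0 := by linear_combination h
      have h5 : mkB (c * xq ^ m + d) = 0 := Ideal.Quotient.eq_zero_iff_mem.2 (zq_ann _ h4)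
      rw [map_add, map_mul, map_pow] at h5
      rw [hd] at h5
      -- h5 : mkB c * xB^m + α⁻¹ * b = 0
      have hxB : mkB xq = xB := rfl
      rw [hxB] at h5
      have hb : b = -(mkB c * (xB ^ m * ↑α)) := by
        linear_combination (↑α : Bq) * h5 + (-b) * α.inv_mul
      rw [hb, ← hc, show (c * zq) • e = c • (zq • e) from mul_smul c zq e,
        hze, ← map_smul, smul_bq, ← map_add]
      simp [hmkB]
  -- assemble the equivalence
  have hker' : LinearMap.ker p = LinearMap.ker q := by
    rw [LinearMap.ker_codRestrict]; exact hker
  have ee : E ≃ₗ[A2] ↥(Iq m) :=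
    ((LinearMap.quotKerEquivOfSurjective p hpsurj).symm.trans
      (Submodule.quotEquivOfEq _ _ hker')).trans
      (LinearMap.quotKerEquivOfSurjective q hqsurj)
  refine ⟨⟨ee⟩, fun hm => ?_⟩
  subst hm
  have htop : Iq 0 = ⊤ := by
    rw [Ideal.eq_top_iff_one]
    exact Ideal.subset_span (by simp [Set.mem_insert_iff])
  exact ⟨ee.trans ((LinearEquiv.ofEq _ _ htop).trans
    Submodule.topEquiv)⟩
end
end
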